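/- For m ≥ 1, the number of non-squashing partitions of 2m+1 into distinct parts equals b(0) + b(1) + ... + b(m), and the number of non-squashing partitions of 2m into distinct parts equals b(0) + b(1) + ... + b(m) - 1. -/

import Mathlib

/-- A partition written as a nondecreasing list of positive parts. -/
def IsPartList (l : List ℕ) : Prop :=
  l.Pairwise (· ≤ ·) ∧ ∀ p ∈ l, 0 < p

/-- A partition with distinct parts, written as a strictly increasing list of positive parts. -/
def DistinctPartList (l : List ℕ) : Prop :=
  l.Pairwise (· < ·) ∧ ∀ p ∈ l, 0 < p

/-- The s-non-squashing condition: (s-1)(p₁+⋯+p_j) ≤ p_{j+1} for 1 ≤ j ≤ k-1. -/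
def NSq (s : ℕ) (l : List ℕ) : Prop :=
  ∀ j, 0 < j → j < l.length → (s - 1) * (l.take j).sum ≤ l.getD j 0

/-- Number of non-squashing partitions of n into distinct parts. -/
noncomputable def b (n : ℕ) : ℕ :=
  {l : List ℕ | DistinctPartList l ∧ NSq 2 l ∧ l.sum = n}.ncard

namespace NSqAux

def S (n : ℕ) : Set (List ℕ) := {l : List ℕ | DistinctPartList l ∧ NSq 2 l ∧ l.sum = n}

lemma b_eq (n : ℕ) : b n = (S n).ncard := rfl

lemma mem_le_of_S {l : List ℕ} {n : ℕ} (h : l ∈ S n) {p : ℕ} (hp : p ∈ l) : p ≤ n := by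
  have h1 := List.single_le_sum (l := l) (fun x _ => Nat.zero_le x) p hp
  rw [h.2.2] at h1; exact h1

/-- injectivity of toFinset on strictly sorted lists -/
lemma sorted_toFinset_inj {l₁ l₂ : List ℕ} (h₁ : l₁.Pairwise (· < ·)) (h₂ : l₂.Pairwise (· < ·))
    (h : l₁.toFinset = l₂.toFinset) : l₁ = l₂ := by
  have n₁ : l₁.Nodup := h₁.imp ne_of_lt
  have n₂ : l₂.Nodup := h₂.imp ne_of_lt
  have hp := List.perm_of_nodup_nodup_toFinset_eq n₁ n₂ h
  exact List.Perm.eq_of_pairwise' (h₁.imp le_of_lt) (h₂.imp le_of_lt) hp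

/-- Finiteness of S n. -/
lemma S_finite (n : ℕ) : (S n).Finite := by
  apply Set.Finite.of_finite_image (f := List.toFinset)
  · apply Set.Finite.subset ((Finset.range (n + 1)).powerset : Finset (Finset ℕ)).finite_toSet
    rintro t ⟨l, hl, rfl⟩
    simp only [Finset.coe_powerset, Set.mem_preimage, Set.mem_powerset_iff,
      Finset.mem_coe, Finset.mem_powerset]
    intro p hp
    simp only [Finset.mem_coe, List.mem_toFinset] at hp ⊢
    have := mem_le_of_S hl hp
    simp only [Finset.mem_range]
    omega
  · intro l₁ h₁ l₂ h₂ h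
    exact sorted_toFinset_inj h₁.1.1 h₂.1.1 h

/-- Characterization of membership of `l ++ [q]` in `S n`. -/
lemma append_mem_S_iff {l : List ℕ} {q n : ℕ} :
    (l ++ [q]) ∈ S n ↔ l ∈ S l.sum ∧ 0 < q ∧ (∀ p ∈ l, p < q) ∧ l.sum ≤ q ∧ l.sum + q = n := by
  constructor
  · rintro ⟨⟨hsort, hpos⟩, hnsq, hsum⟩
    rw [List.sum_append, List.sum_cons, List.sum_nil] at hsum
    have hsort' : l.Pairwise (· < ·) ∧ ∀ p ∈ l, p < q := by
      rw [List.pairwise_append] at hsort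
      refine ⟨hsort.1, fun p hp => hsort.2.2 p hp q (List.mem_singleton_self q)⟩
    have hq : 0 < q := hpos q (by simp)
    have hnsq' : NSq 2 l := by
      intro j hj hjl
      have h2 := hnsq j hj (by simp only [List.length_append, List.length_singleton]; omega)
      rwa [List.take_append_of_le_length (by omega), List.getD_append _ _ _ _ hjl] at h2
    have hle : l.sum ≤ q := by
      rcases Nat.eq_zero_or_pos l.length with h0 | h0
      · rw [List.length_eq_zero_iff] at h0; subst h0; simp
      · have h2 := hnsq l.length h0
          (by simp only [List.length_append, List.length_singleton]; omega)
        rw [List.take_append_of_le_length le_rfl, List.take_length,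
          List.getD_append_right _ _ _ _ le_rfl, Nat.sub_self] at h2
        simpa using h2
    exact ⟨⟨⟨hsort'.1, fun p hp => hpos p (List.mem_append_left _ hp)⟩, hnsq', rfl⟩,
      hq, hsort'.2, hle, by omega⟩
  · rintro ⟨⟨⟨hsort, hpos⟩, hnsq, -⟩, hq, hlt, hle, hsum⟩
    refine ⟨⟨?_, ?_⟩, ?_, ?_⟩
    · rw [List.pairwise_append]
      refine ⟨hsort, List.pairwise_singleton _ _, fun p hp q' hq' => ?_⟩
      rw [List.mem_singleton] at hq'; subst hq'; exact hlt p hp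
    · intro p hp
      rcases List.mem_append.1 hp with h | h
      · exact hpos p h
      · rw [List.mem_singleton] at h; omega
    · intro j hj hjl
      simp only [List.length_append, List.length_singleton] at hjl
      rcases lt_or_ge j l.length with h | h
      · rw [List.take_append_of_le_length (by omega), List.getD_append _ _ _ _ h]
        exact hnsq j hj h
      · have hjeq : j = l.length := by omega
        subst hjeq
        rw [List.take_append_of_le_length le_rfl, List.take_length,
          List.getD_append_right _ _ _ _ le_rfl, Nat.sub_self]
        simpa using hle
    · rw [List.sum_append, List.sum_cons, List.sum_nil]; omega

lemma singleton_mem_S {m : ℕ} (hm : 1 ≤ m) : [m] ∈ S m := by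
  refine ⟨⟨List.pairwise_singleton _ m, ?_⟩, ?_, by simp⟩
  · intro p hp; rw [List.mem_singleton] at hp; omega
  · intro j hj hjl; simp at hjl; omega

lemma eq_singleton_of_mem {l : List ℕ} {m : ℕ} (hl : l ∈ S m) (hmem : m ∈ l) :
    l = [m] := by
  have hp := List.perm_cons_erase hmem
  have hsum : l.sum = m := hl.2.2
  have hsum2 : m + (l.erase m).sum = m := by
    rw [← List.sum_cons, ← hp.sum_eq]; exact hsum
  have herase : l.erase m = [] := by
    rcases List.eq_nil_or_concat (l.erase m) with h | ⟨l', a, h⟩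
    · exact h
    · exfalso
      have ha : a ∈ l.erase m := by rw [h]; simp
      have ha' : a ∈ l := List.mem_of_mem_erase ha
      have h5 := hl.1.2 a ha'
      have h6 := List.single_le_sum (l := l.erase m) (fun x _ => Nat.zero_le x) a ha
      omega
  rw [herase] at hp
  exact List.perm_singleton.mp hp

/-- The set of partitions of r whose parts are all < n - r. -/
def T (n r : ℕ) : Set (List ℕ) := {l | l ∈ S r ∧ ∀ p ∈ l, p < n - r}

lemma T_finite (n r : ℕ) : (T n r).Finite :=
  (S_finite r).subset (fun _ hl => hl.1)

lemma S_eq_biUnion (n : ℕ) (hn : 0 < n) :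
    S n = ⋃ r ∈ Finset.range (n / 2 + 1), (fun l => l ++ [n - r]) '' T n r := by
  ext l
  simp only [Set.mem_iUnion, Finset.mem_range, exists_prop, Set.mem_image]
  constructor
  · intro hl
    have hne : l ≠ [] := by
      intro h; subst h
      have h2 := hl.2.2
      simp only [List.sum_nil] at h2; omega
    rcases List.eq_nil_or_concat l with h | ⟨l', q, rfl⟩
    · exact absurd h hne
    rw [List.concat_eq_append] at hl ⊢
    obtain ⟨hmem, hq, hlt, hle, hsum⟩ := append_mem_S_iff.1 hl
    refine ⟨l'.sum, by omega, l', ⟨hmem, fun p hp => ?_⟩, ?_⟩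
    · have := hlt p hp; omega
    · have : n - l'.sum = q := by omega
      rw [this]
  · rintro ⟨r, hr, l', ⟨hl', hlt⟩, rfl⟩
    have hsum' : l'.sum = r := hl'.2.2
    apply append_mem_S_iff.2
    rw [hsum']
    exact ⟨hsum' ▸ hl', by omega, hlt, by omega, by omega⟩

lemma ncard_biUnion (t : ℕ → Set (List ℕ)) (hfin : ∀ i, (t i).Finite) (k : ℕ)
    (hdisj : ∀ i j, i < k → j < k → i ≠ j → Disjoint (t i) (t j)) :
    (⋃ i ∈ Finset.range k, t i).ncard = ∑ i ∈ Finset.range k, (t i).ncard := by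
  induction k with
  | zero => simp
  | succ k ih =>
    rw [Finset.sum_range_succ, Finset.range_add_one]
    have hU : (⋃ i ∈ insert k (Finset.range k), t i)
        = (⋃ i ∈ Finset.range k, t i) ∪ t k := by
      rw [Finset.set_biUnion_insert, Set.union_comm]
    rw [hU, Set.ncard_union_eq ?_ ?_ (hfin k),
      ih (fun i j hi hj hij => hdisj i j (by omega) (by omega) hij)]
    · refine Set.disjoint_iUnion_left.2 fun i => Set.disjoint_iUnion_left.2 fun hi => ?_
      rw [Finset.mem_range] at hi
      exact hdisj i k (by omega) (by omega) (by omega)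
    · exact Set.Finite.biUnion (Finset.range k).finite_toSet (fun i _ => hfin i)

lemma b_sum (n : ℕ) (hn : 0 < n) :
    b n = ∑ r ∈ Finset.range (n / 2 + 1), (T n r).ncard := by
  rw [b_eq, S_eq_biUnion n hn,
    ncard_biUnion _ (fun r => (T_finite n r).image _) _ ?_]
  · refine Finset.sum_congr rfl fun r _ => ?_
    exact Set.ncard_image_of_injOn (List.append_left_injective _).injOn
  · intro i j hi hj hij
    rw [Set.disjoint_left]
    rintro l ⟨l₁, h₁, rfl⟩ ⟨l₂, h₂, heq⟩
    obtain ⟨h3, h4⟩ := List.append_inj' heq.symm rfl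
    have e1 : l₁.sum = i := h₁.1.2.2
    have e2 : l₂.sum = j := h₂.1.2.2
    have : n - j = n - i := by
      have := List.head_eq_of_cons_eq h4; omega
    omega

lemma T_eq_of_lt {n r : ℕ} (hr : 2 * r < n) : T n r = S r := by
  ext l
  refine ⟨fun h => h.1, fun h => ⟨h, fun p hp => ?_⟩⟩
  have := mem_le_of_S h hp; omega

lemma T_eq_even_top (m : ℕ) (hm : 1 ≤ m) : T (2 * m) m = S m \ {[m]} := by
  ext l
  simp only [T, Set.mem_diff, Set.mem_singleton_iff, Set.mem_setOf_eq]
  constructor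
  · rintro ⟨hl, hlt⟩
    refine ⟨hl, ?_⟩
    rintro rfl
    have := hlt m (by simp); omega
  · rintro ⟨hl, hne⟩
    refine ⟨hl, fun p hp => ?_⟩
    have h1 := mem_le_of_S hl hp
    rcases lt_or_eq_of_le h1 with h | h
    · omega
    · subst h
      exact absurd (eq_singleton_of_mem hl hp) hne

end NSqAux

theorem stmt_5 (m : ℕ) (hm : 1 ≤ m) :
    b (2 * m + 1) = ∑ i ∈ Finset.range (m + 1), b i ∧
    b (2 * m) = (∑ i ∈ Finset.range (m + 1), b i) - 1 := by
  open NSqAux in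
  have hodd : b (2 * m + 1) = ∑ i ∈ Finset.range (m + 1), b i := by
    rw [b_sum (2 * m + 1) (by omega)]
    have hdiv : (2 * m + 1) / 2 = m := by omega
    rw [hdiv]
    refine Finset.sum_congr rfl fun r hr => ?_
    rw [Finset.mem_range] at hr
    rw [T_eq_of_lt (by omega), b_eq]
  have heven : b (2 * m) = (∑ i ∈ Finset.range (m + 1), b i) - 1 := by
    rw [b_sum (2 * m) (by omega)]
    have hdiv : (2 * m) / 2 = m := by omega
    rw [hdiv, Finset.sum_range_succ, Finset.sum_range_succ (f := b)]
    have h1 : ∀ r ∈ Finset.range m, (T (2 * m) r).ncard = b r := by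
      intro r hr
      rw [Finset.mem_range] at hr
      rw [T_eq_of_lt (by omega), b_eq]
    rw [Finset.sum_congr rfl h1, T_eq_even_top m hm,
      Set.ncard_diff_singleton_of_mem (singleton_mem_S hm), ← b_eq]
    have hb : 1 ≤ b m := by
      rw [b_eq]
      have := Set.ncard_pos (S_finite m) |>.2 ⟨[m], singleton_mem_S hm⟩
      omega
    have hrfl : (Finset.range m).sum b = ∑ x ∈ Finset.range m, b x := rfl
    omega
  exact ⟨hodd, heven⟩
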